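/- arXiv:2603.26358 — 2 statements merged into one kernel-verified Lean document; each statement's English description precedes it below -/
import Mathlib

section
/- If E[(Y − E[Y|𝒢])² | 𝒢] = E[(Y − E[Y|ℋ])² | ℋ] P-almost everywhere, then E[Y|𝒢] = E[Y|ℋ] P-almost everywhere (absence of simultaneous Granger causality implies absence of Granger causality in mean; key step in the proof of Proposition 1). -/
open MeasureTheory

/-- The conditional expectation of an `L²` function is in `L²`. -/
lemma memℒp_two_condexp_aux {Ω : Type*} {m m0 : MeasurableSpace Ω} (hm : m ≤ m0)
    (μ : Measure Ω) [IsFiniteMeasure μ] {Y : Ω → ℝ} (hY : MemLp Y 2 μ) :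
    MemLp (μ[Y|m]) 2 μ := by
  let f : Lp ℝ 2 μ := hY.toLp Y
  have hae : (condExpL2 ℝ ℝ hm f : Ω → ℝ) =ᵐ[μ] μ[Y|m] := by
    refine ae_eq_condExp_of_forall_setIntegral_eq hm (hY.integrable one_le_two) ?_ ?_ ?_
    · intro s _ hμs
      exact integrableOn_condExpL2_of_measure_ne_top hm hμs.ne f
    · intro s hs hμs
      rw [integral_condExpL2_eq hm f hs hμs.ne]
      exact setIntegral_congr_ae (hm s hs) ((hY.coeFn_toLp).mono fun x hx _ => hx)
    · exact aestronglyMeasurable_condExpL2 hm f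
  exact (Lp.memLp ((condExpL2 ℝ ℝ hm f : lpMeas ℝ ℝ m 2 μ) : Lp ℝ 2 μ)).ae_eq hae

/-- Absence of simultaneous Granger causality implies absence of Granger causality in mean:
if `E[(Y − E[Y|𝒢])² | 𝒢] = E[(Y − E[Y|ℋ])² | ℋ]` a.e., then `E[Y|𝒢] = E[Y|ℋ]` a.e. -/
theorem condexp_eq_of_condVar_eq
    {Ω : Type*} {mΩ : MeasurableSpace Ω} (P : Measure Ω) [IsProbabilityMeasure P]
    {G H : MeasurableSpace Ω} (hGH : G ≤ H) (hHF : H ≤ mΩ)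
    (Y : Ω → ℝ) (hY : MemLp Y 2 P)
    (hvar : P[(fun ω => (Y ω - (P[Y|G]) ω) ^ 2)|G] =ᵐ[P]
      P[(fun ω => (Y ω - (P[Y|H]) ω) ^ 2)|H]) :
    P[Y|G] =ᵐ[P] P[Y|H] := by
  have hGF : G ≤ mΩ := hGH.trans hHF
  set g : Ω → ℝ := P[Y|G] with hg_def
  set h : Ω → ℝ := P[Y|H] with hh_def
  have hg2 : MemLp g 2 P := memℒp_two_condexp_aux hGF P hY
  have hh2 : MemLp h 2 P := memℒp_two_condexp_aux hHF P hY
  -- W = Y - h, Z = h - g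
  set W : Ω → ℝ := fun ω => Y ω - h ω with hW_def
  set Z : Ω → ℝ := fun ω => h ω - g ω with hZ_def
  have hW2 : MemLp W 2 P := hY.sub hh2
  have hZ2 : MemLp Z 2 P := hh2.sub hg2
  have hZmeas : StronglyMeasurable[H] Z :=
    stronglyMeasurable_condExp.sub (stronglyMeasurable_condExp.mono hGH)
  -- the cross term has zero integral
  have hZW_int : Integrable (fun ω => Z ω * W ω) P := by
    refine Integrable.mono' ((hZ2.integrable_sq.add hW2.integrable_sq).const_mul (1/2))
      (hZ2.aestronglyMeasurable.mul hW2.aestronglyMeasurable) ?_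
    refine Filter.Eventually.of_forall fun ω => ?_
    rw [Real.norm_eq_abs, abs_mul]
    simp only [Pi.add_apply]
    have key : ∀ a b : ℝ, |a| * |b| ≤ 1 / 2 * (a ^ 2 + b ^ 2) := fun a b => by
      nlinarith [sq_nonneg (|a| - |b|), sq_abs a, sq_abs b, abs_nonneg a, abs_nonneg b]
    exact key _ _
  have hW_int : Integrable W P := hW2.integrable one_le_two
  have hcond_W : P[W|H] =ᵐ[P] 0 := by
    have h1 : P[W|H] =ᵐ[P] P[Y|H] - P[h|H] :=
      condExp_sub (hY.integrable one_le_two) (hh2.integrable one_le_two) H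
    have h2 : P[h|H] = h := condExp_of_stronglyMeasurable hHF stronglyMeasurable_condExp
      (hh2.integrable one_le_two)
    filter_upwards [h1] with ω hω
    simp [hω, h2, ← hh_def]
  have hcross : ∫ ω, Z ω * W ω ∂P = 0 := by
    have h1 : P[Z * W|H] =ᵐ[P] Z * P[W|H] :=
      condExp_mul_of_stronglyMeasurable_left hZmeas hZW_int hW_int
    have h2 : P[Z * W|H] =ᵐ[P] 0 := by
      filter_upwards [h1, hcond_W] with ω hω hω'
      simp only [hω, Pi.mul_apply, hω', Pi.zero_apply, mul_zero]
    calc ∫ ω, Z ω * W ω ∂P = ∫ ω, (P[Z * W|H]) ω ∂P := (integral_condExp hHF).symm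
      _ = ∫ ω, (0 : ℝ) ∂P := integral_congr_ae h2
      _ = 0 := by simp
  -- the integrals of the squared residuals agree
  have hYg_sq_int : Integrable (fun ω => (Y ω - g ω) ^ 2) P := (hY.sub hg2).integrable_sq
  have hYh_sq_int : Integrable (fun ω => (Y ω - h ω) ^ 2) P := (hY.sub hh2).integrable_sq
  have hint_eq : ∫ ω, (Y ω - g ω) ^ 2 ∂P = ∫ ω, (Y ω - h ω) ^ 2 ∂P := by
    calc ∫ ω, (Y ω - g ω) ^ 2 ∂P
        = ∫ ω, (P[(fun ω => (Y ω - g ω) ^ 2)|G]) ω ∂P := (integral_condExp hGF).symm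
      _ = ∫ ω, (P[(fun ω => (Y ω - h ω) ^ 2)|H]) ω ∂P := integral_congr_ae hvar
      _ = ∫ ω, (Y ω - h ω) ^ 2 ∂P := integral_condExp hHF
  -- Pythagoras: ∫ (Y-g)² = ∫ W² + ∫ Z² + 2 ∫ Z W
  have hZ_sq_int : Integrable (fun ω => Z ω ^ 2) P := hZ2.integrable_sq
  have hexpand : ∫ ω, (Y ω - g ω) ^ 2 ∂P
      = ∫ ω, (Y ω - h ω) ^ 2 ∂P + ∫ ω, Z ω ^ 2 ∂P + 2 * ∫ ω, Z ω * W ω ∂P := by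
    have hptwise : ∀ ω, (Y ω - g ω) ^ 2 = (Y ω - h ω) ^ 2 + Z ω ^ 2 + 2 * (Z ω * W ω) := by
      intro ω
      have : Y ω - g ω = W ω + Z ω := by
        show Y ω - g ω = (Y ω - h ω) + (h ω - g ω); ring
      rw [this]
      show ((Y ω - h ω) + (h ω - g ω)) ^ 2
        = (Y ω - h ω) ^ 2 + (h ω - g ω) ^ 2 + 2 * ((h ω - g ω) * (Y ω - h ω))
      ring
    have hsum_int : Integrable (fun ω => (Y ω - h ω) ^ 2 + Z ω ^ 2) P :=
      hYh_sq_int.add hZ_sq_int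
    have h2int : Integrable (fun ω => 2 * (Z ω * W ω)) P := hZW_int.const_mul 2
    simp_rw [hptwise]
    rw [integral_add hsum_int h2int, integral_add hYh_sq_int hZ_sq_int, integral_const_mul]
  have hZ_sq_zero : ∫ ω, Z ω ^ 2 ∂P = 0 := by
    have := hexpand
    rw [hint_eq, hcross] at this
    linarith
  have hZ_zero : Z =ᵐ[P] 0 := by
    have h0 : (fun ω => Z ω ^ 2) =ᵐ[P] 0 := by
      rw [← integral_eq_zero_iff_of_nonneg (fun ω => sq_nonneg (Z ω)) hZ_sq_int]
      exact hZ_sq_zero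
    filter_upwards [h0] with ω hω
    have : Z ω ^ 2 = 0 := hω
    exact sq_eq_zero_iff.mp this
  filter_upwards [hZ_zero] with ω hω
  have : h ω - g ω = 0 := hω
  linarith
end

section
/- Assume the identifiability condition B2 and that Q_{1,t}(θ⁽¹⁾) and Q_{2,t}(θ⁽²⁾) are integrable for every θ ∈ Θ. Then the function θ ↦ E[ −Q_{1,t}(θ⁽¹⁾) − Q_{2,t}(θ⁽²⁾) ] attains its minimum over Θ at the unique point θ₀, i.e. Assumption C2 holds for the beta/double-Poisson quasi-likelihoods. [Proposition 3, C2 part] -/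
open MeasureTheory Filter

noncomputable section

namespace MixTSQL

variable {Ω : Type*}

/-- `T₁(y) = log(y/(1−y))`. -/
def T1 (y : ℝ) : ℝ := Real.log (y / (1 - y))

/-- `T₂(y) = log(1+y)`. -/
def T2 (y : ℝ) : ℝ := Real.log (1 + y)

/-- Regressor vector `(1, T₁(Y_{1,τ−1}),…,T₁(Y_{1,τ−r}), T₂(Y_{2,τ−1}),…,T₂(Y_{2,τ−s}))`
entering the linear predictor `ν_{1,τ}`. -/
def X1 (Y1 Y2 : ℤ → Ω → ℝ) (r s : ℕ) (τ : ℤ) (ω : Ω) : Fin (r + s + 1) → ℝ :=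
  Fin.cons 1 (Fin.append (fun i : Fin r => T1 (Y1 (τ - 1 - (i.val : ℤ)) ω))
    (fun l : Fin s => T2 (Y2 (τ - 1 - (l.val : ℤ)) ω)))

/-- Regressor vector `(1, T₂(Y_{2,τ−1}),…,T₂(Y_{2,τ−p}), T₁(Y_{1,τ−1}),…,T₁(Y_{1,τ−k}))`
entering the linear predictor `ν_{2,τ}`. -/
def X2 (Y1 Y2 : ℤ → Ω → ℝ) (p k : ℕ) (τ : ℤ) (ω : Ω) : Fin (p + k + 1) → ℝ :=
  Fin.cons 1 (Fin.append (fun i : Fin p => T2 (Y2 (τ - 1 - (i.val : ℤ)) ω))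
    (fun l : Fin k => T1 (Y1 (τ - 1 - (l.val : ℤ)) ω)))

/-- Linear predictor `ν_{1,τ}(θ⁽¹⁾) = β₀⁽¹⁾ + Σ β_i⁽¹⁾ T₁(Y_{1,τ−i}) + Σ γ_l⁽¹⁾ T₂(Y_{2,τ−l})`. -/
def nu1 (Y1 Y2 : ℤ → Ω → ℝ) (r s : ℕ) (θ1 : Fin (r + s + 1) → ℝ) (τ : ℤ) (ω : Ω) : ℝ :=
  ∑ j, θ1 j * X1 Y1 Y2 r s τ ω j

/-- Linear predictor `ν_{2,τ}(θ⁽²⁾) = β₀⁽²⁾ + Σ β_i⁽²⁾ T₂(Y_{2,τ−i}) + Σ γ_l⁽²⁾ T₁(Y_{1,τ−l})`. -/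
def nu2 (Y1 Y2 : ℤ → Ω → ℝ) (p k : ℕ) (θ2 : Fin (p + k + 1) → ℝ) (τ : ℤ) (ω : Ω) : ℝ :=
  ∑ j, θ2 j * X2 Y1 Y2 p k τ ω j

/-- Conditional mean `μ_{1,τ}(θ⁽¹⁾) = e^{ν_{1,τ}}/(1+e^{ν_{1,τ}})` (logit link). -/
def mu1 (Y1 Y2 : ℤ → Ω → ℝ) (r s : ℕ) (θ1 : Fin (r + s + 1) → ℝ) (τ : ℤ) (ω : Ω) : ℝ :=
  Real.exp (nu1 Y1 Y2 r s θ1 τ ω) / (1 + Real.exp (nu1 Y1 Y2 r s θ1 τ ω))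

/-- Conditional mean `μ_{2,τ}(θ⁽²⁾) = e^{ν_{2,τ}}` (log link). -/
def mu2 (Y1 Y2 : ℤ → Ω → ℝ) (p k : ℕ) (θ2 : Fin (p + k + 1) → ℝ) (τ : ℤ) (ω : Ω) : ℝ :=
  Real.exp (nu2 Y1 Y2 p k θ2 τ ω)

/-- Beta-type quasi-log-likelihood summand
`Q_{1,τ}(θ⁽¹⁾) = φ₁⁻¹ [Y_{1,τ} log μ_{1,τ} + (1−Y_{1,τ}) log(1−μ_{1,τ})]`. -/
def Q1 (Y1 Y2 : ℤ → Ω → ℝ) (r s : ℕ) (φ1 : ℝ) (θ1 : Fin (r + s + 1) → ℝ) (τ : ℤ) (ω : Ω) : ℝ :=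
  φ1⁻¹ * (Y1 τ ω * Real.log (mu1 Y1 Y2 r s θ1 τ ω)
    + (1 - Y1 τ ω) * Real.log (1 - mu1 Y1 Y2 r s θ1 τ ω))

/-- Double-Poisson-type quasi-log-likelihood summand
`Q_{2,τ}(θ⁽²⁾) = φ₂⁻¹ [Y_{2,τ} log μ_{2,τ} − μ_{2,τ}]`. -/
def Q2 (Y1 Y2 : ℤ → Ω → ℝ) (p k : ℕ) (φ2 : ℝ) (θ2 : Fin (p + k + 1) → ℝ) (τ : ℤ) (ω : Ω) : ℝ :=
  φ2⁻¹ * (Y2 τ ω * Real.log (mu2 Y1 Y2 p k θ2 τ ω) - mu2 Y1 Y2 p k θ2 τ ω)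

/-- The past σ-algebra `𝓕_{t−1} = σ((Y_{1,s},Y_{2,s}) : s ≤ t−1)`. -/
def Fpast [MeasurableSpace Ω] (Y1 Y2 : ℤ → Ω → ℝ) (t : ℤ) : MeasurableSpace Ω :=
  ⨆ s : {s : ℤ // s ≤ t - 1},
    MeasurableSpace.comap (Y1 s) (inferInstance : MeasurableSpace ℝ)
      ⊔ MeasurableSpace.comap (Y2 s) (inferInstance : MeasurableSpace ℝ)

open Real

/-- Strict Gibbs inequality for Bernoulli cross-entropy. -/
lemma gibbs {p q : ℝ} (hp0 : 0 < p) (hp1 : p < 1) (hq0 : 0 < q) (hq1 : q < 1)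
    (hne : q ≠ p) :
    p * Real.log q + (1 - p) * Real.log (1 - q)
      < p * Real.log p + (1 - p) * Real.log (1 - p) := by
  have h1 : Real.log (q / p) < q / p - 1 :=
    Real.log_lt_sub_one_of_pos (div_pos hq0 hp0)
      (fun h => hne ((div_eq_one_iff_eq hp0.ne').mp h))
  have h2 : Real.log ((1 - q) / (1 - p)) ≤ (1 - q) / (1 - p) - 1 :=
    Real.log_le_sub_one_of_pos (div_pos (by linarith) (by linarith))
  have e1 : Real.log (q / p) = Real.log q - Real.log p := Real.log_div hq0.ne' hp0.ne'
  have e2 : Real.log ((1 - q) / (1 - p)) = Real.log (1 - q) - Real.log (1 - p) :=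
    Real.log_div (by linarith) (by linarith)
  rw [e1] at h1; rw [e2] at h2
  have a1 : p * (Real.log q - Real.log p) < p * (q / p - 1) :=
    mul_lt_mul_of_pos_left h1 hp0
  have a2 : (1 - p) * (Real.log (1 - q) - Real.log (1 - p)) ≤ (1 - p) * ((1 - q) / (1 - p) - 1) :=
    mul_le_mul_of_nonneg_left h2 (by linarith)
  have b1 : p * (q / p - 1) = q - p := by field_simp
  have hp1' : (1:ℝ) - p ≠ 0 := by linarith
  have b2 : (1 - p) * ((1 - q) / (1 - p) - 1) = p - q := by field_simp; ring
  rw [b1] at a1; rw [b2] at a2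
  nlinarith

/-- logistic function basic facts and the beta kernel gap. -/
lemma sig_pos (x : ℝ) : 0 < Real.exp x / (1 + Real.exp x) :=
  div_pos (Real.exp_pos x) (by positivity)

lemma sig_lt_one (x : ℝ) : Real.exp x / (1 + Real.exp x) < 1 :=
  (div_lt_one (by positivity)).2 (by linarith [Real.exp_pos x])

lemma log_sig (x : ℝ) :
    Real.log (Real.exp x / (1 + Real.exp x)) = x - Real.log (1 + Real.exp x) := by
  rw [Real.log_div (Real.exp_pos x).ne' (by positivity), Real.log_exp]

lemma log_one_sub_sig (x : ℝ) :
    Real.log (1 - Real.exp x / (1 + Real.exp x)) = -Real.log (1 + Real.exp x) := by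
  have h : (1 : ℝ) + Real.exp x ≠ 0 := by positivity
  have e : 1 - Real.exp x / (1 + Real.exp x) = (1 + Real.exp x)⁻¹ := by
    field_simp
    ring
  rw [e, Real.log_inv]

lemma sig_inj {x y : ℝ} (h : Real.exp x / (1 + Real.exp x) = Real.exp y / (1 + Real.exp y)) :
    x = y := by
  have hx : (1 : ℝ) + Real.exp x ≠ 0 := by positivity
  have hy : (1 : ℝ) + Real.exp y ≠ 0 := by positivity
  field_simp at h
  have : Real.exp x = Real.exp y := by nlinarith
  exact Real.exp_injective this

lemma beta_gap_lt {x0 x : ℝ} (hne : x ≠ x0) :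
    0 < Real.exp x0 / (1 + Real.exp x0) * (x0 - x)
      - (Real.log (1 + Real.exp x0) - Real.log (1 + Real.exp x)) := by
  set p := Real.exp x0 / (1 + Real.exp x0) with hp
  set q := Real.exp x / (1 + Real.exp x) with hq
  have key : p * Real.log q + (1 - p) * Real.log (1 - q)
      < p * Real.log p + (1 - p) * Real.log (1 - p) :=
    gibbs (sig_pos x0) (sig_lt_one x0) (sig_pos x) (sig_lt_one x)
      (fun h => hne (sig_inj h))
  rw [hp, hq, log_sig, log_sig, log_one_sub_sig, log_one_sub_sig] at key
  set L0 := Real.log (1 + Real.exp x0)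
  set L := Real.log (1 + Real.exp x)
  nlinarith

lemma beta_gap_nonneg (x0 x : ℝ) :
    0 ≤ Real.exp x0 / (1 + Real.exp x0) * (x0 - x)
      - (Real.log (1 + Real.exp x0) - Real.log (1 + Real.exp x)) := by
  rcases eq_or_ne x x0 with h | h
  · simp [h]
  · exact (beta_gap_lt h).le

lemma beta_gap_eq_zero {x0 x : ℝ}
    (h : Real.exp x0 / (1 + Real.exp x0) * (x0 - x)
      - (Real.log (1 + Real.exp x0) - Real.log (1 + Real.exp x)) = 0) : x = x0 := by
  by_contra hne
  exact absurd h (beta_gap_lt hne).ne'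

lemma pois_gap_lt {x0 x : ℝ} (hne : x ≠ x0) :
    0 < Real.exp x0 * (x0 - x) - (Real.exp x0 - Real.exp x) := by
  have key : (x - x0) + 1 < Real.exp (x - x0) := Real.add_one_lt_exp (by
    intro h; exact hne (by linarith [sub_eq_zero.mp h]))
  have e : Real.exp x = Real.exp x0 * Real.exp (x - x0) := by
    rw [← Real.exp_add]; ring_nf
  nlinarith [Real.exp_pos x0]

lemma pois_gap_nonneg (x0 x : ℝ) :
    0 ≤ Real.exp x0 * (x0 - x) - (Real.exp x0 - Real.exp x) := by
  rcases eq_or_ne x x0 with h | h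
  · simp [h]
  · exact (pois_gap_lt h).le

lemma pois_gap_eq_zero {x0 x : ℝ}
    (h : Real.exp x0 * (x0 - x) - (Real.exp x0 - Real.exp x) = 0) : x = x0 := by
  by_contra hne
  exact absurd h (pois_gap_lt hne).ne'


lemma pullout {m mΩ : MeasurableSpace Ω} (hm : m ≤ mΩ) (P : Measure Ω) [IsFiniteMeasure P]
    {Z d c : Ω → ℝ} (hZ : Integrable Z P) (hd : StronglyMeasurable[m] d)
    (hc : StronglyMeasurable[m] c)
    (hh : Integrable (fun ω => Z ω * d ω - c ω) P) :
    P[fun ω => Z ω * d ω - c ω|m] =ᵐ[P] fun ω => (P[Z|m]) ω * d ω - c ω := by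
  haveI : SigmaFinite (P.trim hm) := by infer_instance
  set A : ℕ → Set Ω := fun n =>
    d ⁻¹' (Set.Icc (-(n : ℝ)) n) ∩ c ⁻¹' (Set.Icc (-(n : ℝ)) n) with hA_def
  have hA : ∀ n : ℕ, MeasurableSet[m] (A n) := fun n =>
    (hd.measurable measurableSet_Icc).inter (hc.measurable measurableSet_Icc)
  -- integrability of the truncated pieces
  have hdn : ∀ n : ℕ, Integrable (((A n).indicator d) * Z) P := by
    intro n
    refine Integrable.mono' (hZ.norm.const_mul n)
      ((((hd.indicator (hA n)).mono hm).aestronglyMeasurable).mul hZ.aestronglyMeasurable)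
      (ae_of_all _ fun ω => ?_)
    simp only [Pi.mul_apply, norm_mul, Real.norm_eq_abs]
    by_cases hmem : ω ∈ A n
    · rw [Set.indicator_of_mem hmem]
      exact mul_le_mul_of_nonneg_right (abs_le.mpr hmem.1) (abs_nonneg _)
    · rw [Set.indicator_of_notMem hmem]
      simp only [abs_zero, zero_mul]
      positivity
  have hcn : ∀ n : ℕ, Integrable ((A n).indicator c) P := by
    intro n
    refine Integrable.mono' (integrable_const (n : ℝ))
      (((hc.indicator (hA n)).mono hm).aestronglyMeasurable)
      (ae_of_all _ fun ω => ?_)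
    simp only [Real.norm_eq_abs]
    by_cases hmem : ω ∈ A n
    · rw [Set.indicator_of_mem hmem]; exact abs_le.mpr hmem.2
    · rw [Set.indicator_of_notMem hmem]; simp
  -- the truncated identity
  have hsplit : ∀ n : ℕ, (A n).indicator (fun ω => Z ω * d ω - c ω)
      = fun ω => ((A n).indicator d * Z) ω - (A n).indicator c ω := by
    intro n
    funext ω
    by_cases hmem : ω ∈ A n
    · simp [Set.indicator_of_mem hmem]; ring
    · simp [Set.indicator_of_notMem hmem]
  have hstep : ∀ n : ℕ, ∀ᵐ ω ∂P, ω ∈ A n → (P[fun ω => Z ω * d ω - c ω|m]) ω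
      = (P[Z|m]) ω * d ω - c ω := by
    intro n
    have e1 : (A n).indicator (P[fun ω => Z ω * d ω - c ω|m])
        =ᵐ[P] P[(A n).indicator (fun ω => Z ω * d ω - c ω)|m] :=
      (condExp_indicator hh (hA n)).symm
    have e2 : P[(A n).indicator (fun ω => Z ω * d ω - c ω)|m]
        =ᵐ[P] P[(A n).indicator d * Z|m] - P[(A n).indicator c|m] := by
      rw [hsplit n]
      exact condExp_sub (hdn n) (hcn n) m
    have e3 : P[(A n).indicator d * Z|m] =ᵐ[P] (A n).indicator d * P[Z|m] :=
      condExp_mul_of_stronglyMeasurable_left (hd.indicator (hA n)) (hdn n) hZ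
    have e4 : P[(A n).indicator c|m] = (A n).indicator c :=
      condExp_of_stronglyMeasurable hm (hc.indicator (hA n)) (hcn n)
    filter_upwards [e1, e2, e3] with ω h1 h2 h3 hmem
    have : (A n).indicator (P[fun ω => Z ω * d ω - c ω|m]) ω
        = (A n).indicator d ω * (P[Z|m]) ω - (A n).indicator c ω := by
      rw [h1, h2]
      simp only [Pi.sub_apply, e4]
      rw [h3]
      simp
    rw [Set.indicator_of_mem hmem] at this
    rw [this, Set.indicator_of_mem hmem, Set.indicator_of_mem hmem]
    ring
  rw [← ae_all_iff] at hstep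
  filter_upwards [hstep] with ω hω
  obtain ⟨n, hn⟩ := exists_nat_ge (max |d ω| |c ω|)
  exact hω n ⟨Set.mem_Icc.mpr (abs_le.mp (le_trans (le_max_left _ _) hn)),
    Set.mem_Icc.mpr (abs_le.mp (le_trans (le_max_right _ _) hn))⟩

lemma key_eq {m mΩ : MeasurableSpace Ω} (hm : m ≤ mΩ) (P : Measure Ω) [IsFiniteMeasure P]
    {Z d c g : Ω → ℝ} (hZ : Integrable Z P) (hd : StronglyMeasurable[m] d)
    (hc : StronglyMeasurable[m] c)
    (hh : Integrable (fun ω => Z ω * d ω - c ω) P)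
    (hg : P[Z|m] =ᵐ[P] g) :
    ∫ ω, (Z ω * d ω - c ω) ∂P = ∫ ω, (g ω * d ω - c ω) ∂P := by
  haveI : SigmaFinite (P.trim hm) := by infer_instance
  have h2 : P[fun ω => Z ω * d ω - c ω|m] =ᵐ[P] fun ω => g ω * d ω - c ω := by
    refine (pullout hm P hZ hd hc hh).trans ?_
    filter_upwards [hg] with ω h
    rw [h]
  rw [← integral_condExp hm (f := fun ω => Z ω * d ω - c ω), integral_congr_ae h2]

lemma key_int {m mΩ : MeasurableSpace Ω} (hm : m ≤ mΩ) (P : Measure Ω) [IsFiniteMeasure P]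
    {Z d c g : Ω → ℝ} (hZ : Integrable Z P) (hd : StronglyMeasurable[m] d)
    (hc : StronglyMeasurable[m] c)
    (hh : Integrable (fun ω => Z ω * d ω - c ω) P)
    (hg : P[Z|m] =ᵐ[P] g) :
    Integrable (fun ω => g ω * d ω - c ω) P := by
  haveI : SigmaFinite (P.trim hm) := by infer_instance
  have h2 : P[fun ω => Z ω * d ω - c ω|m] =ᵐ[P] fun ω => g ω * d ω - c ω := by
    refine (pullout hm P hZ hd hc hh).trans ?_
    filter_upwards [hg] with ω h
    rw [h]
  exact integrable_condExp.congr h2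

lemma key_nonneg {m mΩ : MeasurableSpace Ω} (hm : m ≤ mΩ) (P : Measure Ω) [IsFiniteMeasure P]
    {Z d c g : Ω → ℝ} (hZ : Integrable Z P) (hd : StronglyMeasurable[m] d)
    (hc : StronglyMeasurable[m] c)
    (hh : Integrable (fun ω => Z ω * d ω - c ω) P)
    (hg : P[Z|m] =ᵐ[P] g)
    (hpt : ∀ ω, 0 ≤ g ω * d ω - c ω) :
    0 ≤ ∫ ω, (Z ω * d ω - c ω) ∂P := by
  rw [key_eq hm P hZ hd hc hh hg]
  exact integral_nonneg hpt

lemma key_pos {m mΩ : MeasurableSpace Ω} (hm : m ≤ mΩ) (P : Measure Ω) [IsFiniteMeasure P]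
    {Z d c g ν ν0 : Ω → ℝ} (hZ : Integrable Z P) (hd : StronglyMeasurable[m] d)
    (hc : StronglyMeasurable[m] c)
    (hh : Integrable (fun ω => Z ω * d ω - c ω) P)
    (hg : P[Z|m] =ᵐ[P] g)
    (hpt : ∀ ω, 0 ≤ g ω * d ω - c ω)
    (heq : ∀ ω, g ω * d ω - c ω = 0 → ν ω = ν0 ω)
    (hne : ¬ (ν =ᵐ[P] ν0)) :
    0 < ∫ ω, (Z ω * d ω - c ω) ∂P := by
  rcases lt_or_eq_of_le (key_nonneg hm P hZ hd hc hh hg hpt) with h | h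
  · exact h
  · exfalso
    rw [key_eq hm P hZ hd hc hh hg] at h
    have hzero : (fun ω => g ω * d ω - c ω) =ᵐ[P] 0 :=
      (integral_eq_zero_iff_of_nonneg hpt (key_int hm P hZ hd hc hh hg)).mp h.symm
    refine hne ?_
    filter_upwards [hzero] with ω h0
    exact heq ω h0



-- measurability of a generic cons/append regressor component
lemma measurable_cons_append {m' : MeasurableSpace Ω} {r s : ℕ}
    (f : Fin r → Ω → ℝ) (g : Fin s → Ω → ℝ)
    (hf : ∀ i, Measurable[m'] (f i)) (hg : ∀ l, Measurable[m'] (g l))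
    (j : Fin (r + s + 1)) :
    Measurable[m'] fun ω =>
      Fin.cons (α := fun _ => ℝ) 1 (Fin.append (fun i => f i ω) (fun l => g l ω)) j := by
  refine Fin.cases ?_ (fun i => ?_) j
  · simp only [Fin.cons_zero]
    exact measurable_const
  · simp only [Fin.cons_succ]
    rcases lt_or_ge (i : ℕ) r with h | h
    · have key : (fun ω => Fin.append (fun i' => f i' ω) (fun l => g l ω) i)
          = f ⟨(i : ℕ), h⟩ := by
        funext ω
        simp [Fin.append, Fin.addCases, h, Fin.castLT]
      rw [key]; exact hf _
    · have h2 : (i : ℕ) - r < s := by omega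
      have key : (fun ω => Fin.append (fun i' => f i' ω) (fun l => g l ω) i)
          = g ⟨(i : ℕ) - r, h2⟩ := by
        funext ω
        simp [Fin.append, Fin.addCases, Nat.not_lt.mpr h, Fin.subNat]
      rw [key]; exact hg _

lemma measurable_T1 : Measurable T1 :=
  Real.measurable_log.comp (measurable_id.div (measurable_const.sub measurable_id))

lemma measurable_T2 : Measurable T2 :=
  Real.measurable_log.comp (measurable_const.add measurable_id)

lemma measurable_Y_past {mΩ : MeasurableSpace Ω} (Y1 Y2 : ℤ → Ω → ℝ) (t τ : ℤ)
    (hτ : τ ≤ t - 1) :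
    Measurable[Fpast Y1 Y2 t] (Y1 τ) ∧ Measurable[Fpast Y1 Y2 t] (Y2 τ) := by
  have h1 : MeasurableSpace.comap (Y1 τ) inferInstance
      ⊔ MeasurableSpace.comap (Y2 τ) inferInstance ≤ Fpast Y1 Y2 t :=
    le_iSup (fun s' : {s : ℤ // s ≤ t - 1} =>
      MeasurableSpace.comap (Y1 s') (inferInstance : MeasurableSpace ℝ)
        ⊔ MeasurableSpace.comap (Y2 s') (inferInstance : MeasurableSpace ℝ)) ⟨τ, hτ⟩
  constructor
  · exact measurable_iff_comap_le.mpr (le_trans le_sup_left h1)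
  · exact measurable_iff_comap_le.mpr (le_trans le_sup_right h1)

lemma measurable_nu1 {mΩ : MeasurableSpace Ω} (Y1 Y2 : ℤ → Ω → ℝ) (r s : ℕ)
    (θ1 : Fin (r + s + 1) → ℝ) (t : ℤ) :
    Measurable[Fpast Y1 Y2 t] fun ω => nu1 Y1 Y2 r s θ1 t ω := by
  apply Finset.measurable_sum
  intro j _
  refine Measurable.const_mul ?_ (θ1 j)
  exact measurable_cons_append (fun i ω => T1 (Y1 (t - 1 - (i : ℕ)) ω))
    (fun l ω => T2 (Y2 (t - 1 - (l : ℕ)) ω))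
    (fun i => measurable_T1.comp (measurable_Y_past Y1 Y2 t _ (by omega)).1)
    (fun l => measurable_T2.comp (measurable_Y_past Y1 Y2 t _ (by omega)).2) j

lemma measurable_nu2 {mΩ : MeasurableSpace Ω} (Y1 Y2 : ℤ → Ω → ℝ) (p k : ℕ)
    (θ2 : Fin (p + k + 1) → ℝ) (t : ℤ) :
    Measurable[Fpast Y1 Y2 t] fun ω => nu2 Y1 Y2 p k θ2 t ω := by
  apply Finset.measurable_sum
  intro j _
  refine Measurable.const_mul ?_ (θ2 j)
  exact measurable_cons_append (fun i ω => T2 (Y2 (t - 1 - (i : ℕ)) ω))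
    (fun l ω => T1 (Y1 (t - 1 - (l : ℕ)) ω))
    (fun i => measurable_T2.comp (measurable_Y_past Y1 Y2 t _ (by omega)).2)
    (fun l => measurable_T1.comp (measurable_Y_past Y1 Y2 t _ (by omega)).1) j

lemma Fpast_le {mΩ : MeasurableSpace Ω} (Y1 Y2 : ℤ → Ω → ℝ) (t : ℤ)
    (hY1meas : ∀ τ, Measurable (Y1 τ)) (hY2meas : ∀ τ, Measurable (Y2 τ)) :
    Fpast Y1 Y2 t ≤ mΩ :=
  iSup_le fun s' => sup_le (measurable_iff_comap_le.mp (hY1meas s'))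
    (measurable_iff_comap_le.mp (hY2meas s'))

-- representation of Q1 and Q2
lemma Q1_eq (Y1 Y2 : ℤ → Ω → ℝ) (r s : ℕ) (φ1 : ℝ) (θ1 : Fin (r + s + 1) → ℝ)
    (τ : ℤ) (ω : Ω) :
    Q1 Y1 Y2 r s φ1 θ1 τ ω = φ1⁻¹ * (Y1 τ ω * nu1 Y1 Y2 r s θ1 τ ω
      - Real.log (1 + Real.exp (nu1 Y1 Y2 r s θ1 τ ω))) := by
  unfold Q1 mu1
  rw [log_sig, log_one_sub_sig]
  ring

lemma Q2_eq (Y1 Y2 : ℤ → Ω → ℝ) (p k : ℕ) (φ2 : ℝ) (θ2 : Fin (p + k + 1) → ℝ)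
    (τ : ℤ) (ω : Ω) :
    Q2 Y1 Y2 p k φ2 θ2 τ ω = φ2⁻¹ * (Y2 τ ω * nu2 Y1 Y2 p k θ2 τ ω
      - Real.exp (nu2 Y1 Y2 p k θ2 τ ω)) := by
  unfold Q2 mu2
  rw [Real.log_exp]

/-- **Proposition 3 (C2 part).** Under the identifiability Assumption B2 and integrability of
`Q_{1,t}(θ⁽¹⁾)` and `Q_{2,t}(θ⁽²⁾)` for every `θ ∈ Θ`, the function
`θ ↦ E[−Q_{1,t}(θ⁽¹⁾) − Q_{2,t}(θ⁽²⁾)]` attains its minimum over `Θ = Θ₁ × Θ₂` at the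
unique point `θ₀`, i.e. Assumption C2 holds for the beta/double-Poisson quasi-likelihoods. -/
theorem assumptionC2_holds
    {mΩ : MeasurableSpace Ω} (P : Measure Ω) [IsProbabilityMeasure P]
    (Y1 Y2 : ℤ → Ω → ℝ)
    (hY1meas : ∀ τ, Measurable (Y1 τ)) (hY2meas : ∀ τ, Measurable (Y2 τ))
    (hY1mem : ∀ τ ω, Y1 τ ω ∈ Set.Ioo (0 : ℝ) 1) (hY2nonneg : ∀ τ ω, 0 ≤ Y2 τ ω)
    (r s p k : ℕ) (φ1 φ2 : ℝ) (hφ1 : 0 < φ1) (hφ2 : 0 < φ2)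
    (Θ1 : Set (Fin (r + s + 1) → ℝ)) (Θ2 : Set (Fin (p + k + 1) → ℝ))
    (t : ℤ)
    -- the true parameter θ₀ = (θ₀⁽¹⁾, θ₀⁽²⁾) ∈ Θ and its conditional-mean property
    (θ01 : Fin (r + s + 1) → ℝ) (θ02 : Fin (p + k + 1) → ℝ)
    (hθ0mem : (θ01, θ02) ∈ Θ1 ×ˢ Θ2)
    (htrue1 : P[Y1 t|Fpast Y1 Y2 t] =ᵐ[P] fun ω => mu1 Y1 Y2 r s θ01 t ω)
    (htrue2 : P[Y2 t|Fpast Y1 Y2 t] =ᵐ[P] fun ω => mu2 Y1 Y2 p k θ02 t ω)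
    -- Assumption B2 (identifiability)
    (hB2a : ∀ θ1 : Fin (r + s + 1) → ℝ,
      ((fun ω => nu1 Y1 Y2 r s θ1 t ω) =ᵐ[P] fun ω => nu1 Y1 Y2 r s θ01 t ω) ↔ θ1 = θ01)
    (hB2b : ∀ θ2 : Fin (p + k + 1) → ℝ,
      ((fun ω => nu2 Y1 Y2 p k θ2 t ω) =ᵐ[P] fun ω => nu2 Y1 Y2 p k θ02 t ω) ↔ θ2 = θ02)
    -- integrability of the quasi-log-likelihood summands for every θ ∈ Θ
    (hint1 : ∀ θ1 ∈ Θ1, Integrable (fun ω => Q1 Y1 Y2 r s φ1 θ1 t ω) P)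
    (hint2 : ∀ θ2 ∈ Θ2, Integrable (fun ω => Q2 Y1 Y2 p k φ2 θ2 t ω) P) :
    ∀ θ ∈ Θ1 ×ˢ Θ2, θ ≠ (θ01, θ02) →
      ∫ ω, (-Q1 Y1 Y2 r s φ1 θ01 t ω - Q2 Y1 Y2 p k φ2 θ02 t ω) ∂P <
        ∫ ω, (-Q1 Y1 Y2 r s φ1 θ.1 t ω - Q2 Y1 Y2 p k φ2 θ.2 t ω) ∂P := by

  intro θ hθ hneθ
  obtain ⟨hθ1mem, hθ2mem⟩ := hθ
  have hm : Fpast Y1 Y2 t ≤ mΩ := Fpast_le Y1 Y2 t hY1meas hY2meas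
  -- integrability of Y1 t and Y2 t
  have hY1int : Integrable (Y1 t) P := by
    refine Integrable.mono' (integrable_const (1 : ℝ)) (hY1meas t).aestronglyMeasurable
      (ae_of_all _ fun ω => ?_)
    have h := hY1mem t ω
    rw [Real.norm_eq_abs, abs_of_pos h.1]
    exact h.2.le
  have hY2int : Integrable (Y2 t) P := by
    by_contra hni
    have h0 : P[Y2 t|Fpast Y1 Y2 t] = 0 := condExp_of_not_integrable hni
    rw [h0] at htrue2
    have hfalse : ∀ᵐ ω ∂P, False := by
      filter_upwards [htrue2] with ω hω
      exact (Real.exp_pos (nu2 Y1 Y2 p k θ02 t ω)).ne' hω.symm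
    exact (MeasureTheory.ae_neBot.mpr (IsProbabilityMeasure.ne_zero P)).ne
      (Filter.eventually_false_iff_eq_bot.mp hfalse)
  -- strong measurability of the pieces
  have hν1 : ∀ θ1, StronglyMeasurable[Fpast Y1 Y2 t] fun ω => nu1 Y1 Y2 r s θ1 t ω :=
    fun θ1 => (measurable_nu1 Y1 Y2 r s θ1 t).stronglyMeasurable
  have hν2 : ∀ θ2, StronglyMeasurable[Fpast Y1 Y2 t] fun ω => nu2 Y1 Y2 p k θ2 t ω :=
    fun θ2 => (measurable_nu2 Y1 Y2 p k θ2 t).stronglyMeasurable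
  have hd1 : StronglyMeasurable[Fpast Y1 Y2 t]
      fun ω => nu1 Y1 Y2 r s θ01 t ω - nu1 Y1 Y2 r s θ.1 t ω :=
    (hν1 θ01).sub (hν1 θ.1)
  have hc1 : StronglyMeasurable[Fpast Y1 Y2 t]
      fun ω => Real.log (1 + Real.exp (nu1 Y1 Y2 r s θ01 t ω))
        - Real.log (1 + Real.exp (nu1 Y1 Y2 r s θ.1 t ω)) := by
    have hL : ∀ θ1, StronglyMeasurable[Fpast Y1 Y2 t]
        fun ω => Real.log (1 + Real.exp (nu1 Y1 Y2 r s θ1 t ω)) := fun θ1 =>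
      (Real.measurable_log.comp
        (measurable_const.add (Real.measurable_exp.comp (hν1 θ1).measurable))).stronglyMeasurable
    exact (hL θ01).sub (hL θ.1)
  have hd2 : StronglyMeasurable[Fpast Y1 Y2 t]
      fun ω => nu2 Y1 Y2 p k θ02 t ω - nu2 Y1 Y2 p k θ.2 t ω :=
    (hν2 θ02).sub (hν2 θ.2)
  have hc2 : StronglyMeasurable[Fpast Y1 Y2 t]
      fun ω => Real.exp (nu2 Y1 Y2 p k θ02 t ω) - Real.exp (nu2 Y1 Y2 p k θ.2 t ω) := by
    have hE : ∀ θ2, StronglyMeasurable[Fpast Y1 Y2 t]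
        fun ω => Real.exp (nu2 Y1 Y2 p k θ2 t ω) := fun θ2 =>
      (Real.measurable_exp.comp (hν2 θ2).measurable).stronglyMeasurable
    exact (hE θ02).sub (hE θ.2)
  -- integrability of the kernels
  have hh1 : Integrable (fun ω => Y1 t ω * (nu1 Y1 Y2 r s θ01 t ω - nu1 Y1 Y2 r s θ.1 t ω)
      - (Real.log (1 + Real.exp (nu1 Y1 Y2 r s θ01 t ω))
        - Real.log (1 + Real.exp (nu1 Y1 Y2 r s θ.1 t ω)))) P := by
    have hrepr : (fun ω => Y1 t ω * (nu1 Y1 Y2 r s θ01 t ω - nu1 Y1 Y2 r s θ.1 t ω)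
        - (Real.log (1 + Real.exp (nu1 Y1 Y2 r s θ01 t ω))
          - Real.log (1 + Real.exp (nu1 Y1 Y2 r s θ.1 t ω))))
        = fun ω => φ1 * (Q1 Y1 Y2 r s φ1 θ01 t ω - Q1 Y1 Y2 r s φ1 θ.1 t ω) := by
      funext ω
      rw [Q1_eq, Q1_eq]
      field_simp
      ring
    rw [hrepr]
    exact ((hint1 θ01 hθ0mem.1).sub (hint1 θ.1 hθ1mem)).const_mul φ1
  have hh2 : Integrable (fun ω => Y2 t ω * (nu2 Y1 Y2 p k θ02 t ω - nu2 Y1 Y2 p k θ.2 t ω)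
      - (Real.exp (nu2 Y1 Y2 p k θ02 t ω) - Real.exp (nu2 Y1 Y2 p k θ.2 t ω))) P := by
    have hrepr : (fun ω => Y2 t ω * (nu2 Y1 Y2 p k θ02 t ω - nu2 Y1 Y2 p k θ.2 t ω)
        - (Real.exp (nu2 Y1 Y2 p k θ02 t ω) - Real.exp (nu2 Y1 Y2 p k θ.2 t ω)))
        = fun ω => φ2 * (Q2 Y1 Y2 p k φ2 θ02 t ω - Q2 Y1 Y2 p k φ2 θ.2 t ω) := by
      funext ω
      rw [Q2_eq, Q2_eq]
      field_simp
      ring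
    rw [hrepr]
    exact ((hint2 θ02 hθ0mem.2).sub (hint2 θ.2 hθ2mem)).const_mul φ2
  -- pointwise inequalities
  have hpt1 : ∀ ω, 0 ≤ mu1 Y1 Y2 r s θ01 t ω
      * (nu1 Y1 Y2 r s θ01 t ω - nu1 Y1 Y2 r s θ.1 t ω)
      - (Real.log (1 + Real.exp (nu1 Y1 Y2 r s θ01 t ω))
        - Real.log (1 + Real.exp (nu1 Y1 Y2 r s θ.1 t ω))) := fun ω =>
    beta_gap_nonneg (nu1 Y1 Y2 r s θ01 t ω) (nu1 Y1 Y2 r s θ.1 t ω)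
  have hpt2 : ∀ ω, 0 ≤ mu2 Y1 Y2 p k θ02 t ω
      * (nu2 Y1 Y2 p k θ02 t ω - nu2 Y1 Y2 p k θ.2 t ω)
      - (Real.exp (nu2 Y1 Y2 p k θ02 t ω) - Real.exp (nu2 Y1 Y2 p k θ.2 t ω)) := fun ω =>
    pois_gap_nonneg (nu2 Y1 Y2 p k θ02 t ω) (nu2 Y1 Y2 p k θ.2 t ω)
  -- integral differences
  have hsub1 : ∫ ω, Q1 Y1 Y2 r s φ1 θ01 t ω ∂P - ∫ ω, Q1 Y1 Y2 r s φ1 θ.1 t ω ∂P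
      = φ1⁻¹ * ∫ ω, (Y1 t ω * (nu1 Y1 Y2 r s θ01 t ω - nu1 Y1 Y2 r s θ.1 t ω)
        - (Real.log (1 + Real.exp (nu1 Y1 Y2 r s θ01 t ω))
          - Real.log (1 + Real.exp (nu1 Y1 Y2 r s θ.1 t ω)))) ∂P := by
    rw [← integral_sub (hint1 θ01 hθ0mem.1) (hint1 θ.1 hθ1mem), ← integral_const_mul]
    refine integral_congr_ae (ae_of_all _ fun ω => ?_)
    show Q1 Y1 Y2 r s φ1 θ01 t ω - Q1 Y1 Y2 r s φ1 θ.1 t ω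
      = φ1⁻¹ * (Y1 t ω * (nu1 Y1 Y2 r s θ01 t ω - nu1 Y1 Y2 r s θ.1 t ω)
        - (Real.log (1 + Real.exp (nu1 Y1 Y2 r s θ01 t ω))
          - Real.log (1 + Real.exp (nu1 Y1 Y2 r s θ.1 t ω))))
    rw [Q1_eq, Q1_eq]
    field_simp
    ring
  have hsub2 : ∫ ω, Q2 Y1 Y2 p k φ2 θ02 t ω ∂P - ∫ ω, Q2 Y1 Y2 p k φ2 θ.2 t ω ∂P
      = φ2⁻¹ * ∫ ω, (Y2 t ω * (nu2 Y1 Y2 p k θ02 t ω - nu2 Y1 Y2 p k θ.2 t ω)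
        - (Real.exp (nu2 Y1 Y2 p k θ02 t ω) - Real.exp (nu2 Y1 Y2 p k θ.2 t ω))) ∂P := by
    rw [← integral_sub (hint2 θ02 hθ0mem.2) (hint2 θ.2 hθ2mem), ← integral_const_mul]
    refine integral_congr_ae (ae_of_all _ fun ω => ?_)
    show Q2 Y1 Y2 p k φ2 θ02 t ω - Q2 Y1 Y2 p k φ2 θ.2 t ω
      = φ2⁻¹ * (Y2 t ω * (nu2 Y1 Y2 p k θ02 t ω - nu2 Y1 Y2 p k θ.2 t ω)
        - (Real.exp (nu2 Y1 Y2 p k θ02 t ω) - Real.exp (nu2 Y1 Y2 p k θ.2 t ω)))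
    rw [Q2_eq, Q2_eq]
    field_simp
    ring
  -- component inequalities
  have H1le : ∫ ω, Q1 Y1 Y2 r s φ1 θ.1 t ω ∂P ≤ ∫ ω, Q1 Y1 Y2 r s φ1 θ01 t ω ∂P := by
    have h0 := key_nonneg hm P hY1int hd1 hc1 hh1 htrue1 hpt1
    have := mul_nonneg (inv_pos.mpr hφ1).le h0
    linarith [hsub1]
  have H2le : ∫ ω, Q2 Y1 Y2 p k φ2 θ.2 t ω ∂P ≤ ∫ ω, Q2 Y1 Y2 p k φ2 θ02 t ω ∂P := by
    have h0 := key_nonneg hm P hY2int hd2 hc2 hh2 htrue2 hpt2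
    have := mul_nonneg (inv_pos.mpr hφ2).le h0
    linarith [hsub2]
  have H1lt : θ.1 ≠ θ01 →
      ∫ ω, Q1 Y1 Y2 r s φ1 θ.1 t ω ∂P < ∫ ω, Q1 Y1 Y2 r s φ1 θ01 t ω ∂P := by
    intro hne
    have hnae : ¬ ((fun ω => nu1 Y1 Y2 r s θ.1 t ω) =ᵐ[P] fun ω => nu1 Y1 Y2 r s θ01 t ω) :=
      fun hae => hne ((hB2a θ.1).mp hae)
    have hpos := key_pos hm P hY1int hd1 hc1 hh1 htrue1 hpt1
      (fun ω h => beta_gap_eq_zero h) hnae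
    have := mul_pos (inv_pos.mpr hφ1) hpos
    linarith [hsub1]
  have H2lt : θ.2 ≠ θ02 →
      ∫ ω, Q2 Y1 Y2 p k φ2 θ.2 t ω ∂P < ∫ ω, Q2 Y1 Y2 p k φ2 θ02 t ω ∂P := by
    intro hne
    have hnae : ¬ ((fun ω => nu2 Y1 Y2 p k θ.2 t ω) =ᵐ[P] fun ω => nu2 Y1 Y2 p k θ02 t ω) :=
      fun hae => hne ((hB2b θ.2).mp hae)
    have hpos := key_pos hm P hY2int hd2 hc2 hh2 htrue2 hpt2
      (fun ω h => pois_gap_eq_zero h) hnae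
    have := mul_pos (inv_pos.mpr hφ2) hpos
    linarith [hsub2]
  -- assemble
  have esplit : ∀ (θ1 : Fin (r + s + 1) → ℝ) (θ2 : Fin (p + k + 1) → ℝ),
      θ1 ∈ Θ1 → θ2 ∈ Θ2 →
      ∫ ω, (-Q1 Y1 Y2 r s φ1 θ1 t ω - Q2 Y1 Y2 p k φ2 θ2 t ω) ∂P
        = -(∫ ω, Q1 Y1 Y2 r s φ1 θ1 t ω ∂P) - ∫ ω, Q2 Y1 Y2 p k φ2 θ2 t ω ∂P := by
    intro θ1 θ2 h1 h2
    have hnegint : Integrable (fun ω => -Q1 Y1 Y2 r s φ1 θ1 t ω) P := (hint1 θ1 h1).neg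
    rw [integral_sub hnegint (hint2 θ2 h2), integral_neg]
  rw [esplit θ01 θ02 hθ0mem.1 hθ0mem.2, esplit θ.1 θ.2 hθ1mem hθ2mem]
  have hor : θ.1 ≠ θ01 ∨ θ.2 ≠ θ02 := by
    by_contra h
    push_neg at h
    exact hneθ (Prod.ext h.1 h.2)
  rcases hor with h | h
  · have := H1lt h
    linarith
  · have := H2lt h
    linarith


end MixTSQL
end
end
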